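/- Let f₁,f₂,f₃,f₄ be Schwartz functions on ℝ whose Fourier transforms f̂ⱼ have compact support, and suppose that sup(supp f̂₁) < inf(supp f̂₂). Then for every x ∈ ℝ, C^{1,1,1,−2}(f₁,f₂,f₃,f₄)(x) = f₁(x) · C^{1,1,−2}(f₂,f₃,f₄)(x). -/

import Mathlib

open MeasureTheory

/-- The 4-linear semi-degenerate simplex multiplier `C^{1,1,1,-2}`. -/
noncomputable def C1112 (f₁ f₂ f₃ f₄ : SchwartzMap ℝ ℂ) (x : ℝ) : ℂ :=
  ∫ ξ in {p : ℝ × ℝ × ℝ × ℝ |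
      p.1 < p.2.1 ∧ p.2.1 < p.2.2.1 ∧ p.2.2.1 < -p.2.2.2 / 2},
    FourierTransform.fourier (⇑f₁) ξ.1 * FourierTransform.fourier (⇑f₂) ξ.2.1 *
      FourierTransform.fourier (⇑f₃) ξ.2.2.1 * FourierTransform.fourier (⇑f₄) ξ.2.2.2 *
      Complex.exp ((2 : ℂ) * (Real.pi : ℂ) * Complex.I * (x : ℂ) *
        ((ξ.1 : ℂ) + (ξ.2.1 : ℂ) + (ξ.2.2.1 : ℂ) + (ξ.2.2.2 : ℂ)))

/-- The trilinear semi-degenerate simplex multiplier `C^{1,1,-2}`. -/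
noncomputable def C112 (f₁ f₂ f₃ : SchwartzMap ℝ ℂ) (x : ℝ) : ℂ :=
  ∫ ξ in {p : ℝ × ℝ × ℝ | p.1 < p.2.1 ∧ p.2.1 < -p.2.2 / 2},
    FourierTransform.fourier (⇑f₁) ξ.1 * FourierTransform.fourier (⇑f₂) ξ.2.1 *
      FourierTransform.fourier (⇑f₃) ξ.2.2 *
      Complex.exp ((2 : ℂ) * (Real.pi : ℂ) * Complex.I * (x : ℂ) *
        ((ξ.1 : ℂ) + (ξ.2.1 : ℂ) + (ξ.2.2 : ℂ)))

/-- Fourier inversion written with explicit exponentials. -/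
lemma schwartz_inv_integral (f : SchwartzMap ℝ ℂ) (x : ℝ) :
    ∫ ξ : ℝ, FourierTransform.fourier (⇑f) ξ *
      Complex.exp ((2 : ℂ) * (Real.pi : ℂ) * Complex.I * (x : ℂ) * (ξ : ℂ)) = f x := by
  have hinv := f.continuous.fourierInv_fourier_eq f.integrable
    (SchwartzMap.fourierTransformCLM ℂ f).integrable
  have h2 := congrFun hinv x
  rw [Real.fourierInv_eq'] at h2
  rw [← h2]
  refine integral_congr_ae (Filter.Eventually.of_forall fun v => ?_)
  simp only [smul_eq_mul]
  rw [mul_comm]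
  congr 2
  simp only [RCLike.inner_apply, starRingEnd_apply, star_trivial]
  push_cast
  ring

theorem C1112_splits_when_f1_frequency_separated (f₁ f₂ f₃ f₄ : SchwartzMap ℝ ℂ)
    (h₁ : HasCompactSupport (FourierTransform.fourier (⇑f₁)))
    (h₂ : HasCompactSupport (FourierTransform.fourier (⇑f₂)))
    (h₃ : HasCompactSupport (FourierTransform.fourier (⇑f₃)))
    (h₄ : HasCompactSupport (FourierTransform.fourier (⇑f₄)))
    (hsep : sSup (Function.support (FourierTransform.fourier (⇑f₁))) <
      sInf (Function.support (FourierTransform.fourier (⇑f₂)))) (x : ℝ) :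
    C1112 f₁ f₂ f₃ f₄ x = f₁ x * C112 f₂ f₃ f₄ x := by
  classical
  set F₁ := FourierTransform.fourier (⇑f₁) with hF₁def
  set F₂ := FourierTransform.fourier (⇑f₂) with hF₂def
  set F₃ := FourierTransform.fourier (⇑f₃) with hF₃def
  set F₄ := FourierTransform.fourier (⇑f₄) with hF₄def
  set G : ℝ × ℝ × ℝ × ℝ → ℂ := fun ξ =>
    F₁ ξ.1 * F₂ ξ.2.1 * F₃ ξ.2.2.1 * F₄ ξ.2.2.2 *
      Complex.exp ((2 : ℂ) * (Real.pi : ℂ) * Complex.I * (x : ℂ) *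
        ((ξ.1 : ℂ) + (ξ.2.1 : ℂ) + (ξ.2.2.1 : ℂ) + (ξ.2.2.2 : ℂ))) with hGdef
  set g : ℝ → ℂ := fun t =>
    F₁ t * Complex.exp ((2 : ℂ) * (Real.pi : ℂ) * Complex.I * (x : ℂ) * (t : ℂ)) with hgdef
  set h : ℝ × ℝ × ℝ → ℂ := fun q =>
    F₂ q.1 * F₃ q.2.1 * F₄ q.2.2 *
      Complex.exp ((2 : ℂ) * (Real.pi : ℂ) * Complex.I * (x : ℂ) *
        ((q.1 : ℂ) + (q.2.1 : ℂ) + (q.2.2 : ℂ))) with hhdef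
  set S : Set (ℝ × ℝ × ℝ) := {p | p.1 < p.2.1 ∧ p.2.1 < -p.2.2 / 2} with hSdef
  set A : Set (ℝ × ℝ × ℝ × ℝ) :=
    {p | p.1 < p.2.1 ∧ p.2.1 < p.2.2.1 ∧ p.2.2.1 < -p.2.2.2 / 2} with hAdef
  have hmeasS : MeasurableSet S := by
    apply MeasurableSet.inter
    · exact measurableSet_lt measurable_fst measurable_snd.fst
    · exact measurableSet_lt measurable_snd.fst
        ((measurable_snd.snd.neg).div_const 2)
  have hmeasA : MeasurableSet A := by
    apply MeasurableSet.inter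
    · exact measurableSet_lt measurable_fst measurable_snd.fst
    · apply MeasurableSet.inter
      · exact measurableSet_lt measurable_snd.fst measurable_snd.snd.fst
      · exact measurableSet_lt measurable_snd.snd.fst
          ((measurable_snd.snd.snd.neg).div_const 2)
  have hmeasB : MeasurableSet ((Set.univ : Set ℝ) ×ˢ S) :=
    MeasurableSet.univ.prod hmeasS
  -- the first constraint is vacuous on the support
  have hind : A.indicator G = ((Set.univ : Set ℝ) ×ˢ S).indicator G := by
    funext ξ
    by_cases hA : ξ ∈ A
    · have hBmem : ξ ∈ (Set.univ : Set ℝ) ×ˢ S := ⟨Set.mem_univ _, hA.2⟩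
      rw [Set.indicator_of_mem hA, Set.indicator_of_mem hBmem]
    · rw [Set.indicator_of_notMem hA]
      by_cases hB : ξ ∈ (Set.univ : Set ℝ) ×ˢ S
      · rw [Set.indicator_of_mem hB]
        by_contra hG
        have hG' : G ξ ≠ 0 := fun hz => hG hz.symm
        have hne1 : F₁ ξ.1 ≠ 0 := fun hz => hG' (by simp [hGdef, hz])
        have hne2 : F₂ ξ.2.1 ≠ 0 := fun hz => hG' (by simp [hGdef, hz])
        have hbd1 : BddAbove (Function.support F₁) :=
          (h₁.isCompact.bddAbove).mono (subset_tsupport _)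
        have hbd2 : BddBelow (Function.support F₂) :=
          (h₂.isCompact.bddBelow).mono (subset_tsupport _)
        have h12 : ξ.1 < ξ.2.1 :=
          lt_of_le_of_lt (le_csSup hbd1 hne1)
            (lt_of_lt_of_le hsep (csInf_le hbd2 hne2))
        exact hA ⟨h12, hB.2.1, hB.2.2⟩
      · rw [Set.indicator_of_notMem hB]
  have hGsplit : ∀ ξ : ℝ × ℝ × ℝ × ℝ, G ξ = g ξ.1 * h ξ.2 := by
    intro ξ
    simp only [hGdef, hgdef, hhdef]
    rw [show (2 : ℂ) * (Real.pi : ℂ) * Complex.I * (x : ℂ) *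
        ((ξ.1 : ℂ) + (ξ.2.1 : ℂ) + (ξ.2.2.1 : ℂ) + (ξ.2.2.2 : ℂ)) =
        (2 : ℂ) * (Real.pi : ℂ) * Complex.I * (x : ℂ) * (ξ.1 : ℂ) +
        (2 : ℂ) * (Real.pi : ℂ) * Complex.I * (x : ℂ) *
          ((ξ.2.1 : ℂ) + (ξ.2.2.1 : ℂ) + (ξ.2.2.2 : ℂ)) by ring,
      Complex.exp_add]
    ring
  calc C1112 f₁ f₂ f₃ f₄ x = ∫ ξ in A, G ξ := rfl
    _ = ∫ ξ in (Set.univ : Set ℝ) ×ˢ S, G ξ := by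
        rw [← integral_indicator hmeasA, hind, integral_indicator hmeasB]
    _ = ∫ ξ in (Set.univ : Set ℝ) ×ˢ S, g ξ.1 * h ξ.2
          ∂((volume : Measure ℝ).prod (volume : Measure (ℝ × ℝ × ℝ))) := by
        rw [← MeasureTheory.Measure.volume_eq_prod]
        exact setIntegral_congr_fun hmeasB fun ξ _ => hGsplit ξ
    _ = (∫ t in (Set.univ : Set ℝ), g t) * ∫ q in S, h q :=
        setIntegral_prod_mul g h _ _
    _ = f₁ x * C112 f₂ f₃ f₄ x := by
        rw [Measure.restrict_univ]
        congr 1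
        exact schwartz_inv_integral f₁ x
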